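/- Let $V:(0,1)\to\mathbb{R}$ be a bounded $C^2$ function satisfying $L_k V = 0$ on $(0,1)$, where $L_k V(r) = V''(r) + (\frac{d-2}{r} + \frac{m r^{m-1}}{\varepsilon + r^m}) V'(r) - \frac{k(k+d-3)}{r^2} V(r)$ with $d\geq 3$, $m\geq 2$, $\varepsilon>0$, $k\geq 1$, and suppose $V$ extends continuously to $r=1$. Then $|V(r)| \leq |V(1)| r^{\alpha_k}$ for all $r\in(0,1)$, where $\alpha_k = \frac{-(d+m-3)+\sqrt{(d+m-3)^2+4k(k+d-3)}}{2}$. -/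

import Mathlib

open Set

noncomputable def Wf (τ A a : ℝ) (x : ℝ) : ℝ := τ * x⁻¹ + A * x ^ a
noncomputable def Wf' (τ A a : ℝ) (x : ℝ) : ℝ := τ * (-(x ^ 2)⁻¹) + A * (a * x ^ (a - 1))
noncomputable def Wf'' (τ A a : ℝ) (x : ℝ) : ℝ :=
  τ * (2 / x ^ 3) + A * (a * ((a - 1) * x ^ (a - 2)))

lemma Wf_hasDeriv (τ A a : ℝ) {x : ℝ} (hx : 0 < x) :
    HasDerivAt (Wf τ A a) (Wf' τ A a x) x := by
  unfold Wf Wf'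
  exact ((hasDerivAt_inv hx.ne').const_mul τ).add
    ((Real.hasDerivAt_rpow_const (Or.inl hx.ne')).const_mul A)

lemma Wf'_hasDeriv (τ A a : ℝ) {x : ℝ} (hx : 0 < x) :
    HasDerivAt (Wf' τ A a) (Wf'' τ A a x) x := by
  have h1 : HasDerivAt (fun y : ℝ => y ^ 2) (2 * x) x := by
    simpa using hasDerivAt_pow 2 x
  have h2 := ((h1.inv (pow_ne_zero 2 hx.ne')).neg.const_mul τ).add
    (((Real.hasDerivAt_rpow_const (p := a - 1) (Or.inl hx.ne')).const_mul a).const_mul A)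
  rw [show a - 1 - 1 = a - 2 by ring] at h2
  refine h2.congr_deriv ?_
  unfold Wf''
  have hx2 : x ≠ 0 := hx.ne'
  field_simp

set_option maxHeartbeats 1000000 in
lemma stmt8_core (d : ℕ) (hd : 3 ≤ d) (m : ℝ) (hm : 2 ≤ m) (ε : ℝ) (hε : 0 < ε)
    (k : ℕ) (hk : 1 ≤ k) (αk : ℝ)
    (hαk : αk = (-((d : ℝ) + m - 3)
        + Real.sqrt (((d : ℝ) + m - 3) ^ 2 + 4 * ((k : ℝ) * ((k : ℝ) + (d : ℝ) - 3)))) / 2)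
    (V : ℝ → ℝ)
    (hV2 : ContDiffOn ℝ 2 V (Set.Ioo 0 1))
    (hVbdd : ∃ M : ℝ, ∀ r ∈ Set.Ioo (0 : ℝ) 1, |V r| ≤ M)
    (hVcont : ContinuousOn V (Set.Ioc 0 1))
    (hLV : ∀ r ∈ Set.Ioo (0 : ℝ) 1,
      deriv (deriv V) r
        + (((d : ℝ) - 2) / r + m * r ^ (m - 1) / (ε + r ^ m)) * deriv V r
        - (k : ℝ) * ((k : ℝ) + (d : ℝ) - 3) / r ^ 2 * V r = 0) :
    ∀ r ∈ Set.Ioo (0 : ℝ) 1, V r ≤ |V 1| * r ^ αk := by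
  obtain ⟨M, hM⟩ := hVbdd
  have hd3 : (3 : ℝ) ≤ (d : ℝ) := by exact_mod_cast hd
  have hk1 : (1 : ℝ) ≤ (k : ℝ) := by exact_mod_cast hk
  have hγ1 : 1 ≤ (k : ℝ) * ((k : ℝ) + (d : ℝ) - 3) := by nlinarith
  have hsq : Real.sqrt (((d : ℝ) + m - 3) ^ 2 + 4 * ((k : ℝ) * ((k : ℝ) + (d : ℝ) - 3))) ^ 2
      = ((d : ℝ) + m - 3) ^ 2 + 4 * ((k : ℝ) * ((k : ℝ) + (d : ℝ) - 3)) :=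
    Real.sq_sqrt (by nlinarith)
  have hsqge : (d : ℝ) + m - 3
      ≤ Real.sqrt (((d : ℝ) + m - 3) ^ 2 + 4 * ((k : ℝ) * ((k : ℝ) + (d : ℝ) - 3))) := by
    rw [Real.le_sqrt (by linarith) (by nlinarith)]
    nlinarith
  have hα0 : 0 ≤ αk := by rw [hαk]; linarith
  have hαq : αk ^ 2 + ((d : ℝ) + m - 3) * αk = (k : ℝ) * ((k : ℝ) + (d : ℝ) - 3) := by
    rw [hαk]; nlinarith [hsq]
  have hA : 0 ≤ |V 1| := abs_nonneg _
  have hVd : DifferentiableOn ℝ V (Ioo 0 1) := hV2.differentiableOn (by norm_num)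
  have hV'cd : ContDiffOn ℝ 1 (deriv V) (Ioo 0 1) :=
    hV2.deriv_of_isOpen isOpen_Ioo (by norm_num)
  have hV'd : DifferentiableOn ℝ (deriv V) (Ioo 0 1) := hV'cd.differentiableOn one_ne_zero
  -- key claim with barrier τ/x
  have key : ∀ τ : ℝ, 0 < τ → ∀ r ∈ Ioo (0 : ℝ) 1, V r ≤ τ * r⁻¹ + |V 1| * r ^ αk := by
    intro τ hτ r hr
    obtain ⟨hr0, hr1⟩ := hr
    set M₀ : ℝ := max M 0 with hM₀def
    have hM₀ : 0 ≤ M₀ := le_max_right _ _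
    set δ : ℝ := min r (τ / (M₀ + 1)) with hδdef
    have hδ0 : 0 < δ := lt_min hr0 (div_pos hτ (by linarith))
    have hδr : δ ≤ r := min_le_left _ _
    have hδ1 : δ < 1 := lt_of_le_of_lt hδr hr1
    set u : ℝ → ℝ := fun y => V y - Wf τ (|V 1|) αk y with hudef
    have hIcc : Icc δ 1 ⊆ Ioc (0 : ℝ) 1 := fun x hx => ⟨lt_of_lt_of_le hδ0 hx.1, hx.2⟩
    have hucont : ContinuousOn u (Icc δ 1) := by
      apply (hVcont.mono hIcc).sub
      intro x hx
      exact (Wf_hasDeriv τ (|V 1|) αk (lt_of_lt_of_le hδ0 hx.1)).continuousAt.continuousWithinAt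
    obtain ⟨r₀, hr₀, hmax⟩ := isCompact_Icc.exists_isMaxOn (nonempty_Icc.2 hδ1.le) hucont
    have hmax' : ∀ x ∈ Icc δ 1, u x ≤ u r₀ := isMaxOn_iff.1 hmax
    have hur : u r ≤ u r₀ := hmax' r ⟨hδr, hr1.le⟩
    have hgoal : u r₀ ≤ 0 := by
      by_contra hcon
      push_neg at hcon
      -- boundary values are negative
      have huδ : u δ < 0 := by
        have h1 : V δ ≤ M₀ :=
          le_trans (le_abs_self _) (le_trans (hM δ ⟨hδ0, hδ1⟩) (le_max_left _ _))
        have h2 : M₀ + 1 ≤ τ * δ⁻¹ := by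
          have hle : δ ≤ τ / (M₀ + 1) := min_le_right _ _
          rw [le_div_iff₀ (by linarith)] at hle
          rw [← div_eq_mul_inv, le_div_iff₀ hδ0]
          linarith
        have h3 : 0 ≤ |V 1| * δ ^ αk := mul_nonneg hA (Real.rpow_nonneg hδ0.le _)
        simp only [hudef, Wf]
        linarith
      have hu1 : u 1 < 0 := by
        have h1 : V 1 ≤ |V 1| := le_abs_self _
        simp only [hudef, Wf, Real.one_rpow, inv_one]
        linarith
      have hδr₀ : δ < r₀ := by
        rcases lt_or_eq_of_le hr₀.1 with h | h
        · exact h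
        · exfalso; rw [← h] at hcon; linarith
      have hr₀1 : r₀ < 1 := by
        rcases lt_or_eq_of_le hr₀.2 with h | h
        · exact h
        · exfalso; rw [h] at hcon; linarith
      have hr₀0 : 0 < r₀ := hδ0.trans hδr₀
      have hr₀mem : r₀ ∈ Ioo (0 : ℝ) 1 := ⟨hr₀0, hr₀1⟩
      -- derivative of u
      set u' : ℝ → ℝ := fun y => deriv V y - Wf' τ (|V 1|) αk y with hu'def
      have hu'at : ∀ x ∈ Ioo (0 : ℝ) 1, HasDerivAt u (u' x) x := by
        intro x hx
        exact ((hVd.differentiableAt (isOpen_Ioo.mem_nhds hx)).hasDerivAt).sub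
          (Wf_hasDeriv τ (|V 1|) αk hx.1)
      have hu'0 : u' r₀ = 0 :=
        (hmax.isLocalMax (Icc_mem_nhds hδr₀ hr₀1)).hasDerivAt_eq_zero (hu'at r₀ hr₀mem)
      have hdV : deriv V r₀ = Wf' τ (|V 1|) αk r₀ := by
        have := hu'0
        simp only [hu'def] at this
        linarith
      have hu''at : HasDerivAt u' (deriv (deriv V) r₀ - Wf'' τ (|V 1|) αk r₀) r₀ :=
        ((hV'd.differentiableAt (isOpen_Ioo.mem_nhds hr₀mem)).hasDerivAt).sub
          (Wf'_hasDeriv τ (|V 1|) αk hr₀0)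
      -- the barrier is a supersolution at r₀
      have hxm : (0 : ℝ) < r₀ ^ m := Real.rpow_pos_of_pos hr₀0 m
      have hεx : (0 : ℝ) < ε + r₀ ^ m := by linarith
      have hc0 : 0 ≤ m * r₀ ^ m / (ε + r₀ ^ m) :=
        div_nonneg (mul_nonneg (by linarith) hxm.le) hεx.le
      have hc1 : m * r₀ ^ m / (ε + r₀ ^ m) ≤ m := by
        rw [div_le_iff₀ hεx]; nlinarith
      have hP : (0 : ℝ) < r₀ ^ αk := Real.rpow_pos_of_pos hr₀0 αk
      have e1 : r₀ ^ (αk - 1) = r₀ ^ αk / r₀ := by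
        rw [Real.rpow_sub hr₀0, Real.rpow_one]
      have e2 : r₀ ^ (αk - 2) = r₀ ^ αk / r₀ ^ (2 : ℕ) := by
        rw [show (2 : ℝ) = ((2 : ℕ) : ℝ) by norm_num, Real.rpow_sub hr₀0, Real.rpow_natCast]
      have e3 : r₀ ^ (m - 1) = r₀ ^ m / r₀ := by
        rw [Real.rpow_sub hr₀0, Real.rpow_one]
      have hE : Wf'' τ (|V 1|) αk r₀
          + (((d : ℝ) - 2) / r₀ + m * r₀ ^ (m - 1) / (ε + r₀ ^ m)) * Wf' τ (|V 1|) αk r₀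
          - (k : ℝ) * ((k : ℝ) + (d : ℝ) - 3) / r₀ ^ 2 * Wf τ (|V 1|) αk r₀ ≤ 0 := by
        have h1 : 2 - ((d : ℝ) - 2) - m * r₀ ^ m / (ε + r₀ ^ m)
            - (k : ℝ) * ((k : ℝ) + (d : ℝ) - 3) ≤ 0 := by linarith
        have h2 : αk ^ 2 - αk + ((d : ℝ) - 2) * αk + (m * r₀ ^ m / (ε + r₀ ^ m)) * αk
            - (k : ℝ) * ((k : ℝ) + (d : ℝ) - 3) ≤ 0 := by
          have := mul_le_mul_of_nonneg_right hc1 hα0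
          linarith
        simp only [Wf, Wf', Wf'']
        rw [e1, e2, e3]
        have hEeq : τ * (2 / r₀ ^ 3) + |V 1| * (αk * ((αk - 1) * (r₀ ^ αk / r₀ ^ (2:ℕ))))
            + (((d : ℝ) - 2) / r₀ + m * (r₀ ^ m / r₀) / (ε + r₀ ^ m))
              * (τ * (-(r₀ ^ 2)⁻¹) + |V 1| * (αk * (r₀ ^ αk / r₀)))
            - (k : ℝ) * ((k : ℝ) + (d : ℝ) - 3) / r₀ ^ 2 * (τ * r₀⁻¹ + |V 1| * r₀ ^ αk)
            = τ * ((2 - ((d : ℝ) - 2) - m * r₀ ^ m / (ε + r₀ ^ m)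
                - (k : ℝ) * ((k : ℝ) + (d : ℝ) - 3)) / r₀ ^ 3)
              + |V 1| * ((αk ^ 2 - αk + ((d : ℝ) - 2) * αk
                + (m * r₀ ^ m / (ε + r₀ ^ m)) * αk
                - (k : ℝ) * ((k : ℝ) + (d : ℝ) - 3)) * r₀ ^ αk / r₀ ^ 2) := by
          field_simp
          ring
        rw [hEeq]
        have k1 : (2 - ((d : ℝ) - 2) - m * r₀ ^ m / (ε + r₀ ^ m)
            - (k : ℝ) * ((k : ℝ) + (d : ℝ) - 3)) / r₀ ^ 3 ≤ 0 :=
          div_nonpos_of_nonpos_of_nonneg h1 (by positivity)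
        have k2 : (αk ^ 2 - αk + ((d : ℝ) - 2) * αk + (m * r₀ ^ m / (ε + r₀ ^ m)) * αk
            - (k : ℝ) * ((k : ℝ) + (d : ℝ) - 3)) * r₀ ^ αk / r₀ ^ 2 ≤ 0 :=
          div_nonpos_of_nonpos_of_nonneg (mul_nonpos_of_nonpos_of_nonneg h2 hP.le)
            (by positivity)
        have t1 : τ * ((2 - ((d : ℝ) - 2) - m * r₀ ^ m / (ε + r₀ ^ m)
            - (k : ℝ) * ((k : ℝ) + (d : ℝ) - 3)) / r₀ ^ 3) ≤ 0 :=
          mul_nonpos_of_nonneg_of_nonpos hτ.le k1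
        have t2 : |V 1| * ((αk ^ 2 - αk + ((d : ℝ) - 2) * αk
            + (m * r₀ ^ m / (ε + r₀ ^ m)) * αk
            - (k : ℝ) * ((k : ℝ) + (d : ℝ) - 3)) * r₀ ^ αk / r₀ ^ 2) ≤ 0 :=
          mul_nonpos_of_nonneg_of_nonpos hA k2
        linarith
      -- hence the second derivative of u at the max is positive
      have hODE := hLV r₀ hr₀mem
      rw [hdV] at hODE
      have hq : 0 < (k : ℝ) * ((k : ℝ) + (d : ℝ) - 3) / r₀ ^ 2 :=
        div_pos (by linarith) (by positivity)
      have hqu := mul_pos hq hcon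
      have hquexp : (k : ℝ) * ((k : ℝ) + (d : ℝ) - 3) / r₀ ^ 2 * u r₀
          = (k : ℝ) * ((k : ℝ) + (d : ℝ) - 3) / r₀ ^ 2 * V r₀
            - (k : ℝ) * ((k : ℝ) + (d : ℝ) - 3) / r₀ ^ 2 * Wf τ (|V 1|) αk r₀ := by
        simp only [hudef]; ring
      have hD : 0 < deriv (deriv V) r₀ - Wf'' τ (|V 1|) αk r₀ := by linarith
      -- derive a contradiction with the maximality via strict monotonicity
      have hslope : Filter.Tendsto (slope u' r₀) (nhdsWithin r₀ {r₀}ᶜ)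
          (nhds (deriv (deriv V) r₀ - Wf'' τ (|V 1|) αk r₀)) :=
        hasDerivAt_iff_tendsto_slope.1 hu''at
      have hev : ∀ᶠ y in nhdsWithin r₀ (Ioi r₀), 0 < u' y := by
        have h1 : ∀ᶠ y in nhdsWithin r₀ {r₀}ᶜ, 0 < slope u' r₀ y :=
          hslope.eventually (lt_mem_nhds hD)
        have h2 : nhdsWithin r₀ (Ioi r₀) ≤ nhdsWithin r₀ {r₀}ᶜ :=
          nhdsWithin_mono _ (fun y hy => ne_of_gt hy)
        filter_upwards [h2 h1, self_mem_nhdsWithin] with y hy hymem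
        rw [slope_def_field, hu'0, sub_zero] at hy
        have h3 := mul_pos hy (sub_pos.2 (hymem : r₀ < y))
        rwa [div_mul_cancel₀ _ (sub_ne_zero.2 (ne_of_gt hymem))] at h3
      obtain ⟨c, hc, hsub⟩ := mem_nhdsGT_iff_exists_Ioo_subset.1 hev
      have hcm : r₀ < min c 1 := lt_min hc hr₀1
      set x₂ : ℝ := (r₀ + min c 1) / 2 with hx₂def
      have hx₂1 : r₀ < x₂ := by simp only [hx₂def]; linarith
      have hx₂2 : x₂ < min c 1 := by simp only [hx₂def]; linarith
      have hx₂c : x₂ < c := lt_of_lt_of_le hx₂2 (min_le_left _ _)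
      have hx₂lt1 : x₂ < 1 := lt_of_lt_of_le hx₂2 (min_le_right _ _)
      have hsubset : Icc r₀ x₂ ⊆ Ioo (0 : ℝ) 1 := fun y hy =>
        ⟨lt_of_lt_of_le hr₀0 hy.1, lt_of_le_of_lt hy.2 hx₂lt1⟩
      have hmono : StrictMonoOn u (Icc r₀ x₂) := by
        apply strictMonoOn_of_deriv_pos (convex_Icc _ _)
        · intro y hy
          exact (hu'at y (hsubset hy)).continuousAt.continuousWithinAt
        · intro y hy
          rw [interior_Icc] at hy
          rw [(hu'at y (hsubset ⟨hy.1.le, hy.2.le⟩)).deriv]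
          exact hsub ⟨hy.1, lt_trans hy.2 hx₂c⟩
      have hlt : u r₀ < u x₂ :=
        hmono (left_mem_Icc.2 hx₂1.le) (right_mem_Icc.2 hx₂1.le) hx₂1
      have hle : u x₂ ≤ u r₀ := hmax' x₂ ⟨le_trans hδr₀.le hx₂1.le, hx₂lt1.le⟩
      linarith
    have : u r ≤ 0 := le_trans hur hgoal
    simp only [hudef, Wf] at this
    linarith
  intro r hr
  apply le_of_forall_pos_le_add
  intro ε' hε'
  have h := key (ε' * r) (mul_pos hε' hr.1) r hr
  rw [mul_assoc, mul_inv_cancel₀ hr.1.ne', mul_one] at h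
  linarith

theorem stmt_8 (d : ℕ) (hd : 3 ≤ d) (m : ℝ) (hm : 2 ≤ m) (ε : ℝ) (hε : 0 < ε)
    (k : ℕ) (hk : 1 ≤ k) (αk : ℝ)
    (hαk : αk = (-((d : ℝ) + m - 3)
        + Real.sqrt (((d : ℝ) + m - 3) ^ 2 + 4 * ((k : ℝ) * ((k : ℝ) + (d : ℝ) - 3)))) / 2)
    (V : ℝ → ℝ)
    (hV2 : ContDiffOn ℝ 2 V (Set.Ioo 0 1))
    (hVbdd : ∃ M : ℝ, ∀ r ∈ Set.Ioo (0 : ℝ) 1, |V r| ≤ M)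
    (hVcont : ContinuousOn V (Set.Ioc 0 1))
    (hLV : ∀ r ∈ Set.Ioo (0 : ℝ) 1,
      deriv (deriv V) r
        + (((d : ℝ) - 2) / r + m * r ^ (m - 1) / (ε + r ^ m)) * deriv V r
        - (k : ℝ) * ((k : ℝ) + (d : ℝ) - 3) / r ^ 2 * V r = 0) :
    ∀ r ∈ Set.Ioo (0 : ℝ) 1, |V r| ≤ |V 1| * r ^ αk := by
  have hpos := stmt8_core d hd m hm ε hε k hk αk hαk V hV2 hVbdd hVcont hLV
  have hVneg2 : ContDiffOn ℝ 2 (fun x => -V x) (Set.Ioo 0 1) := hV2.neg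
  have hVnegbdd : ∃ M : ℝ, ∀ r ∈ Set.Ioo (0 : ℝ) 1, |(fun x => -V x) r| ≤ M := by
    obtain ⟨M, hM⟩ := hVbdd
    exact ⟨M, fun r hr => by simpa using hM r hr⟩
  have hVnegcont : ContinuousOn (fun x => -V x) (Set.Ioc 0 1) := hVcont.neg
  have hderiv : deriv (fun x => -V x) = fun x => -deriv V x := funext fun x => deriv.neg
  have hLVneg : ∀ r ∈ Set.Ioo (0 : ℝ) 1,
      deriv (deriv (fun x => -V x)) r
        + (((d : ℝ) - 2) / r + m * r ^ (m - 1) / (ε + r ^ m)) * deriv (fun x => -V x) r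
        - (k : ℝ) * ((k : ℝ) + (d : ℝ) - 3) / r ^ 2 * (fun x => -V x) r = 0 := by
    intro r hr
    have h := hLV r hr
    rw [hderiv]
    have h2 : deriv (fun x => -deriv V x) r = -deriv (deriv V) r := deriv.neg
    rw [h2]
    simp only []
    ring_nf
    ring_nf at h
    linarith
  have hneg := stmt8_core d hd m hm ε hε k hk αk hαk (fun x => -V x)
    hVneg2 hVnegbdd hVnegcont hLVneg
  intro r hr
  rw [abs_le]
  constructor
  · have h := hneg r hr
    simp only [abs_neg] at h
    linarith
  · exact hpos r hr
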